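/- For all integers n ≥ 1 and m, a, b ≥ 0, the (area, bounce) q,t-enumerator of decorated Dyck paths with decorated falls satisfies DDb_{q,t}(m, n∖n)^{∗b,∘a} = δ_{a,0} · q^{binom(n−b,2)} · qbinom(m+n−1, m)_q · qbinom(n, b)_q, where δ_{a,0} = 1 if a = 0 and 0 otherwise, and binom(n−b,2) = (n−b)(n−b−1)/2. -/

import Mathlib

open Finset

attribute [local instance] Classical.propDecidable
set_option linter.unusedSectionVars false

noncomputable section

/-- The ring of polynomials in the two variables `q` and `t` with integer coefficients. -/
abbrev R2 : Type := MvPolynomial (Fin 2) ℤ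

/-- The variable `q`. -/
def qv : R2 := MvPolynomial.X 0

/-- The variable `t`. -/
def tv : R2 := MvPolynomial.X 1

/-- The Gaussian binomial coefficient `[N choose k]_q`, defined via the q-Pascal
recursion `[N+1, k+1]_q = [N, k]_q + q^(k+1) [N, k+1]_q`; it agrees with
`[N]_q! / ([k]_q! [N-k]_q!)` for `0 ≤ k ≤ N` and vanishes for `k > N`. -/
def qBinom : ℕ → ℕ → R2
  | _, 0 => 1
  | 0, _ + 1 => 0
  | N + 1, k + 1 => qBinom N k + qv ^ (k + 1) * qBinom N (k + 1)

/-- The Gaussian binomial coefficient with integer arguments: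
it is `0` unless `0 ≤ k ≤ N`. -/
def qBinomZ (N k : ℤ) : R2 :=
  if 0 ≤ k ∧ k ≤ N then qBinom N.toNat k.toNat else 0

/-! ## Dyck paths as step words

A lattice path is encoded as a word `w : Fin L → Bool`, where `true` is a north
step and `false` is an east step. -/

/-- The number of north steps among the first `k` steps. -/
def nBef {L : ℕ} (w : Fin L → Bool) (k : ℕ) : ℕ :=
  (univ.filter fun i : Fin L => i.1 < k ∧ w i = true).card

/-- The number of east steps among the first `k` steps. -/
def eBef {L : ℕ} (w : Fin L → Bool) (k : ℕ) : ℕ :=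
  (univ.filter fun i : Fin L => i.1 < k ∧ w i = false).card

/-- `w` is the step word of a Dyck path of size `N`: it has `N` north steps
(hence `N` east steps) and every prefix has at least as many norths as easts,
i.e. the path stays weakly above the main diagonal. -/
def IsDyckStep (N : ℕ) (w : Fin (2 * N) → Bool) : Prop :=
  nBef w (2 * N) = N ∧ ∀ k : ℕ, k ≤ 2 * N → eBef w k ≤ nBef w k

/-- A valley: a north step directly preceded by an east step. -/
def IsValleyS {L : ℕ} (w : Fin L → Bool) (i : Fin L) : Prop :=
  w i = true ∧ ∃ j : Fin L, i.1 = j.1 + 1 ∧ w j = false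

/-- A peak: a north step followed by an east step, or the last (north) step. -/
def IsPeakS {L : ℕ} (w : Fin L → Bool) (i : Fin L) : Prop :=
  w i = true ∧ ∀ j : Fin L, j.1 = i.1 + 1 → w j = false

/-- A fall: an east step immediately followed by another east step. -/
def IsFallS {L : ℕ} (w : Fin L → Bool) (i : Fin L) : Prop :=
  w i = false ∧ ∃ j : Fin L, j.1 = i.1 + 1 ∧ w j = false

/-- A fall, where additionally the last step of the path is allowed. -/
def IsFallX {L : ℕ} (w : Fin L → Bool) (i : Fin L) : Prop :=
  w i = false ∧ (i.1 + 1 = L ∨ ∃ j : Fin L, j.1 = i.1 + 1 ∧ w j = false)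

/-! ## The bounce statistic for Dyck paths with zero valleys

Every zero valley (its north step together with the east step immediately
preceding it) is replaced by a diagonal step; the modified path has exactly one
east or diagonal step in each column.  The bounce path starts at the origin
travelling north; when it reaches the beginning of the east/diagonal step of
the path in its current column it travels east/diagonally, parallel to the
steps of the path in the columns it traverses, until it reaches the main
diagonal, where it turns north again. -/

/-- Column `c` of the modified path carries a diagonal step: the east step of
column `c` is immediately followed by a zero valley. -/
def IsDiagCol {L : ℕ} (w : Fin L → Bool) (Z : Finset (Fin L)) (c : ℕ) : Prop :=
  ∃ i j : Fin L, w i = false ∧ eBef w i.1 = c ∧ j.1 = i.1 + 1 ∧ j ∈ Z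

/-- The rise (`0` or `1`) of the modified path’s step in column `c`. -/
def diagStep {L : ℕ} (w : Fin L → Bool) (Z : Finset (Fin L)) (c : ℕ) : ℕ :=
  if IsDiagCol w Z c then 1 else 0

/-- The height of the beginning of the east/diagonal step of the path in
column `c` (the number of north steps before the `(c+1)`-st east step). -/
def colY {L : ℕ} (w : Fin L → Bool) (c : ℕ) : ℕ :=
  (univ.filter fun i : Fin L => w i = true ∧ eBef w i.1 ≤ c).card

/-- The height of the bounce ball, having last touched the diagonal in column
`d`, upon reaching the vertical line `x = c`. -/
def bH {L : ℕ} (w : Fin L → Bool) (Z : Finset (Fin L)) (d c : ℕ) : ℕ :=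
  colY w d + ∑ x ∈ Finset.Ico d c, diagStep w Z x

/-- The column of the next point where the bounce path touches the main
diagonal, having last touched it in column `d` (for an actual Dyck path the
bounce path reaches the corner in column `N`, so the clause `c = N` only makes
the function stabilize at `N`). -/
def nextTouch (N : ℕ) {L : ℕ} (w : Fin L → Bool) (Z : Finset (Fin L)) (d : ℕ) : ℕ :=
  sInf {c : ℕ | (d < c ∧ bH w Z d c = c) ∨ c = N}

/-- The column of the `k`-th touching point of the bounce path with the main
diagonal. -/
def touchPt (N : ℕ) {L : ℕ} (w : Fin L → Bool) (Z : Finset (Fin L)) : ℕ → ℕ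
  | 0 => 0
  | k + 1 => nextTouch N w Z (touchPt N w Z k)

/-- The letter of the bounce word carried by the vertical-or-diagonal bounce
step at height `h`: the number of diagonal touches up to that height. -/
def bLabel (N : ℕ) {L : ℕ} (w : Fin L → Bool) (Z : Finset (Fin L)) (h : ℕ) : ℕ :=
  ((Finset.Icc 1 N).filter fun k => touchPt N w Z k ≤ h).card

/-- The height, upon reaching the vertical line `x = c`, of the path traced
east from (the top of) the north step `p`, parallel to the bounce path. -/
def traceH {L : ℕ} (w : Fin L → Bool) (Z : Finset (Fin L)) (p : Fin L) (c : ℕ) : ℕ :=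
  (nBef w p.1 + 1) + ∑ x ∈ Finset.Ico (eBef w p.1) c, diagStep w Z x

/-- The index (height) of the bounce-word letter cancelled by the decorated
peak `p`: the trace from `p` travels east, parallel to the bounce path, until
it first hits a vertical run of the bounce path, at the end of a
vertical-or-diagonal bounce step. -/
def cancelIdx (N : ℕ) {L : ℕ} (w : Fin L → Bool) (Z : Finset (Fin L)) (p : Fin L) : ℕ :=
  traceH w Z p
      (sInf {d : ℕ | eBef w p.1 ≤ d ∧ (∃ k ≤ N, touchPt N w Z k = d) ∧
        d ≤ traceH w Z p d ∧ traceH w Z p d ≤ colY w d}) - 1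

/-- The bounce statistic: the sum of the letters of the bounce word whose
indices are not cancelled by a decorated peak in `P`. -/
def bounceS (N : ℕ) {L : ℕ} (w : Fin L → Bool) (Z P : Finset (Fin L)) : ℕ :=
  ∑ h ∈ (Finset.range N).filter (fun h => h ∉ P.image (cancelIdx N w Z)), bLabel N w Z h

/-! ## The set `DDb(m, n∖r)^{∗b, ∘a}` -/

/-- Candidate objects: (step word, zero valleys, decorated peaks, decorated falls). -/
abbrev DDbCand (N : ℕ) :=
  (Fin (2 * N) → Bool) × Finset (Fin (2 * N)) × Finset (Fin (2 * N)) × Finset (Fin (2 * N))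

/-- Membership in `DDb(m, n∖r)^{∗b, ∘a}`: a Dyck path of size `m+n` with `m`
zero valleys, `a` decorated peaks (which are not zero valleys, and the
leftmost peak is never decorated), `b` decorated falls (the last step of the
path being allowed as a decorated fall), starting with exactly `r` north steps
followed by an east step. -/
def IsDDb (m n r b a : ℕ) (x : DDbCand (m + n)) : Prop :=
  IsDyckStep (m + n) x.1 ∧
    (∀ i ∈ x.2.1, IsValleyS x.1 i) ∧ x.2.1.card = m ∧
    (∀ i ∈ x.2.2.1, IsPeakS x.1 i) ∧ x.2.2.1.card = a ∧
    Disjoint x.2.2.1 x.2.1 ∧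
    (∀ i ∈ x.2.2.1, ∃ j : Fin (2 * (m + n)), IsPeakS x.1 j ∧ j.1 < i.1) ∧
    (∀ i ∈ x.2.2.2, IsFallX x.1 i) ∧ x.2.2.2.card = b ∧
    (∀ i : Fin (2 * (m + n)), i.1 < r → x.1 i = true) ∧
    (∀ i : Fin (2 * (m + n)), i.1 = r → x.1 i = false)

/-- The area: the number of whole squares between the path and the main
diagonal not lying in a column of a decorated fall (the column of the east
step `i` contains `nBef - eBef - 1` such squares). -/
def areaDDb {N : ℕ} (x : DDbCand N) : ℕ :=
  ∑ i ∈ univ.filter (fun i => x.1 i = false ∧ i ∉ x.2.2.2),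
    (nBef x.1 i.1 - eBef x.1 i.1 - 1)

/-- The bounce statistic of a decorated path. -/
def bounceDDb {N : ℕ} (x : DDbCand N) : ℕ := bounceS N x.1 x.2.1 x.2.2.1

/-- The `(area, bounce)` q,t-enumerator `DDb_{q,t}(m, n∖r)^{∗b, ∘a}`;
it is `0` if some parameter is negative. -/
def DDbE (m n r b a : ℤ) : R2 :=
  if 0 ≤ m ∧ 0 ≤ n ∧ 0 ≤ r ∧ 0 ≤ b ∧ 0 ≤ a then
    ∑ x ∈ univ.filter (IsDDb m.toNat n.toNat r.toNat b.toNat a.toNat),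
      qv ^ areaDDb x * tv ^ bounceDDb x
  else 0


/-! ## auxiliary algebra -/
lemma qBinom_zero_right (N : ℕ) : qBinom N 0 = 1 := by cases N <;> rfl

lemma qBinom_succ_succ (N k : ℕ) :
    qBinom (N+1) (k+1) = qBinom N k + qv ^ (k+1) * qBinom N (k+1) := rfl

lemma qBinom_zero : ∀ {N k : ℕ}, N < k → qBinom N k = 0 := by
  intro N
  induction N with
  | zero => intro k hk; match k, hk with | k+1, _ => rfl
  | succ N ih =>
    intro k hk
    match k, hk with
    | k+1, hk =>
      rw [qBinom_succ_succ, ih (by omega), ih (by omega)]; ring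

lemma choose2_succ (d : ℕ) : (d+1).choose 2 = d.choose 2 + d := by
  have h : (d+1).choose 2 = d.choose 1 + d.choose 2 := rfl
  rw [Nat.choose_one_right] at h
  omega

lemma sum_range_id_eq_choose (n : ℕ) : (∑ i ∈ range n, i) = n.choose 2 := by
  have h := Finset.sum_range_id_mul_two n
  rw [Nat.choose_two_right]; omega

def pB (T : Finset ℕ) (c : ℕ) : ℕ := ((range c) \ T).card

def Hsum (N B : ℕ) : R2 :=
  ∑ E ∈ (range N).powersetCard B, qv ^ (∑ j ∈ range N \ E, j)

def Gsum (M N : ℕ) : R2 :=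
  ∑ T ∈ (range (M+N-1)).powersetCard M, qv ^ (∑ c ∈ T, (N - 1 - pB T c))

lemma Hsum_zero (N : ℕ) : Hsum N 0 = qv ^ (N.choose 2) := by
  unfold Hsum
  rw [Finset.powersetCard_zero, Finset.sum_singleton, Finset.sdiff_empty,
    sum_range_id_eq_choose]

lemma Hsum_of_lt {N B : ℕ} (h : N < B) : Hsum N B = 0 := by
  unfold Hsum
  rw [Finset.powersetCard_eq_empty.2 (by simpa using h), Finset.sum_empty]

lemma Hsum_succ (N B : ℕ) :
    Hsum (N+1) (B+1) = Hsum N B + qv ^ N * Hsum N (B+1) := by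
  have hN : N ∉ range N := by simp
  have hins : range (N+1) = insert N (range N) := by
    ext x; simp [Finset.mem_insert]; omega
  have hA : ∑ E ∈ (range N).powersetCard (B+1), qv ^ (∑ j ∈ insert N (range N) \ E, j)
      = qv ^ N * Hsum N (B+1) := by
    unfold Hsum
    rw [Finset.mul_sum]
    apply Finset.sum_congr rfl
    intro E hE
    rw [Finset.mem_powersetCard] at hE
    have h1 : insert N (range N) \ E = insert N (range N \ E) := by
      ext x
      simp only [Finset.mem_sdiff, Finset.mem_insert]
      constructor
      · rintro ⟨h | h, h2⟩
        · left; exact h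
        · right; exact ⟨h, h2⟩
      · rintro (h | ⟨h1', h2⟩)
        · subst h; exact ⟨Or.inl rfl, fun hx => hN (hE.1 hx)⟩
        · exact ⟨Or.inr h1', h2⟩
    rw [h1, Finset.sum_insert (by simp), pow_add]
  have hB : ∑ E ∈ (((range N).powersetCard B).image (insert N)),
        qv ^ (∑ j ∈ insert N (range N) \ E, j) = Hsum N B := by
    unfold Hsum
    rw [Finset.sum_image]
    · apply Finset.sum_congr rfl
      intro E hE
      rw [Finset.mem_powersetCard] at hE
      congr 1
      have : insert N (range N) \ insert N E = range N \ E := by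
        ext x
        simp only [Finset.mem_sdiff, Finset.mem_insert, not_or]
        constructor
        · rintro ⟨h | h, h2, h3⟩
          · exact absurd h h2
          · exact ⟨h, h3⟩
        · rintro ⟨h1', h2⟩
          exact ⟨Or.inr h1', fun hx => hN (hx ▸ h1'), h2⟩
      rw [this]
    · intro E1 h1 E2 h2 heq
      rw [Finset.mem_coe, Finset.mem_powersetCard] at h1 h2
      have e1 : N ∉ E1 := fun h => hN (h1.1 h)
      have e2 : N ∉ E2 := fun h => hN (h2.1 h)
      have := congrArg (Finset.erase · N) heq
      simpa [Finset.erase_insert e1, Finset.erase_insert e2] using this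
  have hdisj : Disjoint ((range N).powersetCard (B+1))
      (((range N).powersetCard B).image (insert N)) := by
    rw [Finset.disjoint_left]
    intro E hE hE2
    rw [Finset.mem_powersetCard] at hE
    simp only [Finset.mem_image] at hE2
    obtain ⟨E', hE', rfl⟩ := hE2
    exact hN (hE.1 (Finset.mem_insert_self N E'))
  unfold Hsum at hA hB ⊢
  rw [hins, Finset.powersetCard_succ_insert hN, Finset.sum_union hdisj, hA, hB, add_comm]

lemma Hsum_eq : ∀ N B : ℕ, Hsum N B = qv ^ ((N - B).choose 2) * qBinom N B := by
  intro N
  induction N with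
  | zero =>
    intro B
    match B with
    | 0 => rw [Hsum_zero, qBinom_zero_right, mul_one]
    | B+1 => rw [Hsum_of_lt (by omega), qBinom_zero (by omega), mul_zero]
  | succ N ih =>
    intro B
    match B with
    | 0 =>
      rw [Hsum_zero, qBinom_zero_right, mul_one, Nat.sub_zero]
    | B+1 =>
      have he : N+1-(B+1) = N-B := by omega
      rw [Hsum_succ, ih B, ih (B+1), he, qBinom_succ_succ, mul_add]
      congr 1
      by_cases hBN : B + 1 ≤ N
      · have h2 : (N-B).choose 2 = (N-B-1).choose 2 + (N-B-1) := by
          have hc := choose2_succ (N-B-1)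
          have hd : N - B - 1 + 1 = N - B := by omega
          rw [hd] at hc
          exact hc
        rw [← mul_assoc, ← mul_assoc, ← pow_add, ← pow_add]
        congr 2
        have he2 : N - (B+1) = N - B - 1 := by omega
        rw [he2]
        omega
      · rw [qBinom_zero (show N < B+1 by omega)]
        ring

lemma Gsum_zero (N : ℕ) : Gsum 0 N = 1 := by
  unfold Gsum
  rw [Finset.powersetCard_zero, Finset.sum_singleton, Finset.sum_empty, pow_zero]

lemma Gsum_succ_zero (M : ℕ) : Gsum (M+1) 0 = 0 := by
  unfold Gsum
  rw [Finset.powersetCard_eq_empty.2 (by rw [Finset.card_range]; omega), Finset.sum_empty]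

lemma pB_le {T : Finset ℕ} {A : ℕ} (hT : T ⊆ range A) {c : ℕ} (hc : c ≤ A) :
    pB T c ≤ A - T.card := by
  have h1 : range c \ T ⊆ range A \ T :=
    Finset.sdiff_subset_sdiff (by intro x hx; rw [Finset.mem_range] at *; omega)
      (le_refl _)
  calc pB T c ≤ (range A \ T).card := Finset.card_le_card h1
    _ = A - T.card := by rw [Finset.card_sdiff_of_subset hT, Finset.card_range]

lemma Gsum_succ (M N : ℕ) :
    Gsum (M+1) (N+1) = Gsum M (N+1) + qv ^ (M+1) * Gsum (M+1) N := by
  have hN : M+N ∉ range (M+N) := by simp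
  have hins : range (M+N+1) = insert (M+N) (range (M+N)) := by
    ext x; simp [Finset.mem_insert]; omega
  have hA : ∑ T ∈ (range (M+N)).powersetCard (M+1), qv ^ (∑ c ∈ T, ((N+1) - 1 - pB T c))
      = qv ^ (M+1) * Gsum (M+1) N := by
    unfold Gsum
    have e3 : (M+1)+N-1 = M+N := by omega
    rw [e3, Finset.mul_sum]
    apply Finset.sum_congr rfl
    intro T hT
    rw [Finset.mem_powersetCard] at hT
    rw [← pow_add]
    congr 1
    symm
    have hpb : ∀ c ∈ T, pB T c ≤ N - 1 ∧ 1 ≤ N := by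
      intro c hc
      have h1 := pB_le hT.1 (le_of_lt (Finset.mem_range.1 (hT.1 hc)))
      rw [hT.2] at h1
      have hcard := Finset.card_le_card hT.1
      rw [hT.2, Finset.card_range] at hcard
      exact ⟨by omega, by omega⟩
    calc (M+1) + ∑ c ∈ T, (N - 1 - pB T c)
        = ∑ c ∈ T, ((N - 1 - pB T c) + 1) := by
          rw [Finset.sum_add_distrib, Finset.sum_const, hT.2, smul_eq_mul, mul_one,
            add_comm]
      _ = ∑ c ∈ T, ((N+1) - 1 - pB T c) := by
          apply Finset.sum_congr rfl
          intro c hc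
          have := hpb c hc
          omega
  have hB : ∑ T ∈ (((range (M+N)).powersetCard M).image (insert (M+N))),
        qv ^ (∑ c ∈ T, ((N+1) - 1 - pB T c)) = Gsum M (N+1) := by
    unfold Gsum
    have e2 : M+(N+1)-1 = M+N := by omega
    rw [e2, Finset.sum_image]
    · apply Finset.sum_congr rfl
      intro E hE
      rw [Finset.mem_powersetCard] at hE
      have hNE : M+N ∉ E := fun h => hN (hE.1 h)
      congr 1
      rw [Finset.sum_insert hNE]
      have htop : pB (insert (M+N) E) (M+N) = N := by
        unfold pB
        have : range (M+N) \ insert (M+N) E = range (M+N) \ E := by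
          ext x
          simp only [Finset.mem_sdiff, Finset.mem_insert, not_or, Finset.mem_range]
          constructor
          · rintro ⟨h1, _, h3⟩; exact ⟨h1, h3⟩
          · rintro ⟨h1, h2⟩; exact ⟨h1, by omega, h2⟩
        rw [this, Finset.card_sdiff_of_subset hE.1, Finset.card_range, hE.2]
        omega
      rw [htop]
      have h0 : (N+1) - 1 - N = 0 := by omega
      rw [h0, zero_add]
      apply Finset.sum_congr rfl
      intro c hc
      have hpb : pB (insert (M+N) E) c = pB E c := by
        unfold pB
        congr 1
        ext x
        simp only [Finset.mem_sdiff, Finset.mem_insert, not_or, Finset.mem_range]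
        have hcr : c < M+N := Finset.mem_range.1 (hE.1 hc)
        constructor
        · rintro ⟨h1, _, h3⟩; exact ⟨h1, h3⟩
        · rintro ⟨h1, h2⟩; exact ⟨h1, by omega, h2⟩
      rw [hpb]
    · intro E1 h1 E2 h2 heq
      rw [Finset.mem_coe, Finset.mem_powersetCard] at h1 h2
      have e1' : M+N ∉ E1 := fun h => hN (h1.1 h)
      have e2' : M+N ∉ E2 := fun h => hN (h2.1 h)
      have := congrArg (Finset.erase · (M+N)) heq
      simpa [Finset.erase_insert e1', Finset.erase_insert e2'] using this
  have hdisj : Disjoint ((range (M+N)).powersetCard (M+1))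
      (((range (M+N)).powersetCard M).image (insert (M+N))) := by
    rw [Finset.disjoint_left]
    intro T hT hT2
    rw [Finset.mem_powersetCard] at hT
    simp only [Finset.mem_image] at hT2
    obtain ⟨E', hE', rfl⟩ := hT2
    exact hN (hT.1 (Finset.mem_insert_self _ E'))
  have e1 : (M+1)+(N+1)-1 = M+N+1 := by omega
  unfold Gsum at hA hB ⊢
  rw [e1, hins, Finset.powersetCard_succ_insert hN, Finset.sum_union hdisj, hA, hB,
    add_comm]

lemma Gsum_eq : ∀ M N : ℕ, Gsum M N = qBinom (M+N-1) M := by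
  intro M
  induction M with
  | zero =>
    intro N; rw [Gsum_zero, qBinom_zero_right]
  | succ M ihM =>
    intro N
    induction N with
    | zero =>
      rw [Gsum_succ_zero, qBinom_zero (by omega)]
    | succ N ihN =>
      rw [Gsum_succ, ihM (N+1), ihN]
      have e1 : M+(N+1)-1 = M+N := by omega
      have e2 : (M+1)+N-1 = M+N := by omega
      have e3 : (M+1)+(N+1)-1 = (M+N)+1 := by omega
      rw [e1, e2, e3, qBinom_succ_succ]


/-! ## new lemmas -/

section Counting
variable {L : ℕ} (w : Fin L → Bool)

lemma card_filter_val_lt {k : ℕ} (hk : k ≤ L) :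
    (univ.filter fun i : Fin L => i.1 < k).card = k := by
  have h : (univ.filter fun i : Fin L => i.1 < k).card = (range k).card := by
    apply Finset.card_bij (fun i _ => i.1)
    · intro a ha; rw [Finset.mem_filter] at ha; exact Finset.mem_range.2 ha.2
    · intro a _ b _ h; exact Fin.ext h
    · intro b hb; rw [Finset.mem_range] at hb
      exact ⟨⟨b, lt_of_lt_of_le hb hk⟩, Finset.mem_filter.2 ⟨Finset.mem_univ _, hb⟩, rfl⟩
  rw [h, Finset.card_range]

lemma nBef_add_eBef {k : ℕ} (hk : k ≤ L) : nBef w k + eBef w k = k := by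
  unfold nBef eBef
  have hdis : Disjoint (univ.filter fun i : Fin L => i.1 < k ∧ w i = true)
      (univ.filter fun i : Fin L => i.1 < k ∧ w i = false) := by
    rw [Finset.disjoint_left]
    intro i h1 h2
    rw [Finset.mem_filter] at h1 h2
    rw [h1.2.2] at h2
    exact absurd h2.2.2 (by simp)
  rw [← Finset.card_union_of_disjoint hdis]
  have hun : (univ.filter fun i : Fin L => i.1 < k ∧ w i = true) ∪
      (univ.filter fun i : Fin L => i.1 < k ∧ w i = false)
      = (univ.filter fun i : Fin L => i.1 < k) := by
    ext i
    simp only [Finset.mem_union, Finset.mem_filter, Finset.mem_univ, true_and]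
    cases h : w i
    · constructor
      · rintro (⟨h1, _⟩ | ⟨h1, _⟩) <;> exact h1
      · intro h1; exact Or.inr ⟨h1, rfl⟩
    · constructor
      · rintro (⟨h1, _⟩ | ⟨h1, _⟩) <;> exact h1
      · intro h1; exact Or.inl ⟨h1, rfl⟩
  rw [hun, card_filter_val_lt hk]

lemma eBef_mono {k k' : ℕ} (h : k ≤ k') : eBef w k ≤ eBef w k' := by
  apply Finset.card_le_card
  intro i hi
  rw [Finset.mem_filter] at hi ⊢
  exact ⟨hi.1, by omega, hi.2.2⟩

lemma eBef_lt_of_false {i : Fin L} (hi : w i = false) {k : ℕ} (h : i.1 < k) :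
    eBef w i.1 < eBef w k := by
  apply Finset.card_lt_card
  rw [Finset.ssubset_iff_of_subset]
  · exact ⟨i, Finset.mem_filter.2 ⟨Finset.mem_univ _, h, hi⟩,
      fun hc => by rw [Finset.mem_filter] at hc; omega⟩
  · intro j hj
    rw [Finset.mem_filter] at hj ⊢
    exact ⟨hj.1, by omega, hj.2.2⟩

lemma lt_of_eBef_lt {i i' : Fin L} (h : eBef w i.1 < eBef w i'.1) : i.1 < i'.1 := by
  by_contra hc
  exact absurd (eBef_mono w (by omega : i'.1 ≤ i.1)) (by omega)

lemma eBef_injOn_false {i i' : Fin L} (hi : w i = false) (hi' : w i' = false)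
    (h : eBef w i.1 = eBef w i'.1) : i = i' := by
  rcases lt_trichotomy i.1 i'.1 with hlt | heq | hgt
  · exact absurd (eBef_lt_of_false w hi hlt) (by omega)
  · exact Fin.ext heq
  · exact absurd (eBef_lt_of_false w hi' hgt) (by omega)

lemma eBef_succ (k : ℕ) (hk : k < L) :
    eBef w (k+1) = eBef w k + (if w ⟨k, hk⟩ = false then 1 else 0) := by
  unfold eBef
  have hsp : (univ.filter fun i : Fin L => i.1 < k+1 ∧ w i = false)
      = (univ.filter fun i : Fin L => i.1 < k ∧ w i = false) ∪
        (univ.filter fun i : Fin L => i.1 = k ∧ w i = false) := by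
    ext i
    simp only [Finset.mem_union, Finset.mem_filter, Finset.mem_univ, true_and]
    constructor
    · rintro ⟨h1, h2⟩
      rcases Nat.lt_succ_iff_lt_or_eq.1 h1 with h | h
      · exact Or.inl ⟨h, h2⟩
      · exact Or.inr ⟨h, h2⟩
    · rintro (⟨h1, h2⟩ | ⟨h1, h2⟩) <;> exact ⟨by omega, h2⟩
  rw [hsp, Finset.card_union_of_disjoint]
  · congr 1
    by_cases hw : w ⟨k, hk⟩ = false
    · rw [if_pos hw]
      rw [show (univ.filter fun i : Fin L => i.1 = k ∧ w i = false) = {⟨k, hk⟩} from ?_]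
      · exact Finset.card_singleton _
      · ext i
        simp only [Finset.mem_filter, Finset.mem_univ, true_and, Finset.mem_singleton]
        constructor
        · rintro ⟨h1, _⟩; exact Fin.ext h1
        · rintro rfl; exact ⟨rfl, hw⟩
    · rw [if_neg hw]
      rw [Finset.card_eq_zero]
      ext i
      simp only [Finset.mem_filter, Finset.mem_univ, true_and, Finset.notMem_empty,
        iff_false, not_and]
      intro h1
      have : i = ⟨k, hk⟩ := Fin.ext h1
      rw [this]
      simpa using hw
  · rw [Finset.disjoint_left]
    intro i h1 h2
    rw [Finset.mem_filter] at h1 h2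
    omega

lemma nBef_succ (k : ℕ) (hk : k < L) :
    nBef w (k+1) = nBef w k + (if w ⟨k, hk⟩ = true then 1 else 0) := by
  have h1 := nBef_add_eBef w (show k+1 ≤ L by omega)
  have h2 := nBef_add_eBef w (show k ≤ L by omega)
  have h3 := eBef_succ w k hk
  cases hw : w ⟨k, hk⟩ <;> rw [hw] at h3 <;> simp at h3 ⊢ <;> omega

end Counting


/-! ## The constructed word -/

/-- number of FT-columns before column `c` -/
def gg (T : Finset ℕ) (c : ℕ) : ℕ := (range c ∩ T).card

lemma gg_add_pB (T : Finset ℕ) (c : ℕ) : gg T c + pB T c = c := by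
  unfold gg pB
  rw [Finset.card_inter_add_card_sdiff, Finset.card_range]

lemma gg_mono (T : Finset ℕ) {c c' : ℕ} (h : c ≤ c') : gg T c ≤ gg T c' := by
  apply Finset.card_le_card
  apply Finset.inter_subset_inter_right
  intro x hx; rw [Finset.mem_range] at *; omega

lemma gg_le_card (T : Finset ℕ) (c : ℕ) : gg T c ≤ T.card :=
  Finset.card_le_card Finset.inter_subset_right

lemma gg_succ_of_mem {T : Finset ℕ} {c : ℕ} (h : c ∈ T) : gg T (c+1) = gg T c + 1 := by
  unfold gg
  rw [show range (c+1) ∩ T = insert c (range c ∩ T) from ?_]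
  · rw [Finset.card_insert_of_notMem (by simp)]
  · ext x
    simp only [Finset.mem_inter, Finset.mem_range, Finset.mem_insert]
    constructor
    · rintro ⟨h1, h2⟩
      rcases Nat.lt_succ_iff_lt_or_eq.1 h1 with h' | h'
      · exact Or.inr ⟨h', h2⟩
      · exact Or.inl h'
    · rintro (rfl | ⟨h1, h2⟩)
      · exact ⟨by omega, h⟩
      · exact ⟨by omega, h2⟩

lemma gg_succ_of_not_mem {T : Finset ℕ} {c : ℕ} (h : c ∉ T) : gg T (c+1) = gg T c := by
  unfold gg
  congr 1
  ext x
  simp only [Finset.mem_inter, Finset.mem_range]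
  constructor
  · rintro ⟨h1, h2⟩
    refine ⟨?_, h2⟩
    rcases Nat.lt_succ_iff_lt_or_eq.1 h1 with h' | h'
    · exact h'
    · exact absurd (h' ▸ h2) h
  · rintro ⟨h1, h2⟩; exact ⟨by omega, h2⟩

/-- position of the east step of column `c` -/
def posT (N : ℕ) (T : Finset ℕ) (c : ℕ) : ℕ := N + c + gg T c

lemma posT_strictMono (N : ℕ) (T : Finset ℕ) : StrictMono (posT N T) := by
  intro c c' h
  unfold posT
  have := gg_mono T (le_of_lt h)
  omega

/-- the constructed word -/
def wd (M N : ℕ) (T : Finset ℕ) : Fin (2*(M+N)) → Bool :=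
  fun i => if ∃ c, c < M+N ∧ posT N T c = i.1 then false else true

lemma wd_false_iff (M N : ℕ) (T : Finset ℕ) (i : Fin (2*(M+N))) :
    wd M N T i = false ↔ ∃ c, c < M+N ∧ posT N T c = i.1 := by
  unfold wd
  by_cases h : ∃ c, c < M+N ∧ posT N T c = i.1
  · simp [h]
  · simp [h]

lemma wd_true_iff (M N : ℕ) (T : Finset ℕ) (i : Fin (2*(M+N))) :
    wd M N T i = true ↔ ¬ ∃ c, c < M+N ∧ posT N T c = i.1 := by
  rw [← wd_false_iff]
  cases h : wd M N T i <;> simp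

section WordLemmas

variable {M N : ℕ} {T : Finset ℕ}
  (hT : T ⊆ range (M+N-1)) (hTc : T.card = M) (hN : 1 ≤ N)

include hT hTc

lemma posT_last : posT N T (M+N-1) = 2*(M+N) - 1 := by
  unfold posT
  have : gg T (M+N-1) = M := by
    unfold gg
    rw [Finset.inter_eq_right.2 hT, hTc]
  omega

lemma posT_lt {c : ℕ} (hc : c < M+N) : posT N T c < 2*(M+N) := by
  have h1 : posT N T c ≤ posT N T (M+N-1) := by
    rcases eq_or_lt_of_le (show c ≤ M+N-1 by omega) with h | h
    · rw [h]
    · exact le_of_lt (posT_strictMono N T h)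
  rw [posT_last hT hTc] at h1
  omega

lemma pB_le_N {c : ℕ} (hc : c ≤ M+N-1) : pB T c ≤ N-1 := by
  have := pB_le hT hc
  rw [hTc] at this
  omega

include hN

lemma wd_true_of_lt {i : Fin (2*(M+N))} (hi : i.1 < N) : wd M N T i = true := by
  rw [wd_true_iff]
  rintro ⟨c, _, hc2⟩
  unfold posT at hc2
  omega

lemma wd_pos_false {c : ℕ} (hc : c < M+N) :
    wd M N T ⟨posT N T c, posT_lt hT hTc hc⟩ = false := by
  rw [wd_false_iff]
  exact ⟨c, hc, rfl⟩

lemma eBef_wd (k : ℕ) :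
    eBef (wd M N T) k = ((range (M+N)).filter fun c => posT N T c < k).card := by
  unfold eBef
  symm
  apply Finset.card_bij
    (fun c hc => (⟨posT N T c,
      posT_lt hT hTc (Finset.mem_range.1 (Finset.mem_filter.1 hc).1)⟩ : Fin (2*(M+N))))
  · intro c hc
    rw [Finset.mem_filter] at hc ⊢
    refine ⟨Finset.mem_univ _, hc.2, ?_⟩
    exact wd_pos_false hT hTc hN (Finset.mem_range.1 hc.1)
  · intro c1 h1 c2 h2 heq
    have := congrArg Fin.val heq
    simp only at this
    exact (posT_strictMono N T).injective this
  · intro i hi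
    rw [Finset.mem_filter] at hi
    obtain ⟨c, hc, hpc⟩ := (wd_false_iff M N T i).1 hi.2.2
    refine ⟨c, Finset.mem_filter.2 ⟨Finset.mem_range.2 hc, by omega⟩, Fin.ext hpc⟩

lemma eBef_wd_pos {c : ℕ} (hc : c < M+N) : eBef (wd M N T) (posT N T c) = c := by
  rw [eBef_wd hT hTc hN]
  have : (range (M+N)).filter (fun c' => posT N T c' < posT N T c) = range c := by
    ext c'
    simp only [Finset.mem_filter, Finset.mem_range]
    constructor
    · rintro ⟨h1, h2⟩
      exact (posT_strictMono N T).lt_iff_lt.1 h2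
    · intro h
      exact ⟨by omega, posT_strictMono N T h⟩
  rw [this, Finset.card_range]

lemma eBef_wd_total : eBef (wd M N T) (2*(M+N)) = M+N := by
  rw [eBef_wd hT hTc hN]
  have : (range (M+N)).filter (fun c' => posT N T c' < 2*(M+N)) = range (M+N) := by
    ext c'
    simp only [Finset.mem_filter, Finset.mem_range]
    exact ⟨fun h => h.1, fun h => ⟨h, posT_lt hT hTc h⟩⟩
  rw [this, Finset.card_range]

lemma nBef_wd_pos {c : ℕ} (hc : c < M+N) :
    nBef (wd M N T) (posT N T c) = N + gg T c := by
  have h1 := nBef_add_eBef (wd M N T) (show posT N T c ≤ 2*(M+N) from le_of_lt (posT_lt hT hTc hc))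
  rw [eBef_wd_pos hT hTc hN hc] at h1
  unfold posT at h1 ⊢
  omega

lemma dyck_wd : IsDyckStep (M+N) (wd M N T) := by
  constructor
  · have h1 := nBef_add_eBef (wd M N T) (le_refl (2*(M+N)))
    rw [eBef_wd_total hT hTc hN] at h1
    omega
  · intro k hk
    have h1 := nBef_add_eBef (wd M N T) hk
    have h2 : 2 * eBef (wd M N T) k ≤ k := by
      rw [eBef_wd hT hTc hN]
      set F := (range (M+N)).filter (fun c => posT N T c < k) with hF
      rcases Finset.eq_empty_or_nonempty F with he | hne
      · rw [he]; simp
      · have hm := Finset.max'_mem F hne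
        set m := F.max' hne with hmd
        have hcard : F.card ≤ m + 1 := by
          have : F ⊆ range (m+1) := by
            intro x hx
            rw [Finset.mem_range]
            have := Finset.le_max' F x hx
            omega
          calc F.card ≤ (range (m+1)).card := Finset.card_le_card this
            _ = m+1 := Finset.card_range _
        rw [hF, Finset.mem_filter, Finset.mem_range] at hm
        obtain ⟨hm1, hm2⟩ := hm
        have hpos : 0 < F.card := Finset.card_pos.2 hne
        have hcm : F.card - 1 ≤ m := by omega
        have hposle : posT N T (F.card - 1) ≤ posT N T m := by
          rcases eq_or_lt_of_le hcm with h | h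
          · rw [h]
          · exact le_of_lt (posT_strictMono N T h)
        have hflt : F.card ≤ M+N := by
          calc F.card ≤ (range (M+N)).card := Finset.card_le_card (Finset.filter_subset _ _)
            _ = M+N := Finset.card_range _
        have hgg := gg_add_pB T (F.card - 1)
        have hpb := pB_le_N hT hTc (show F.card - 1 ≤ M+N-1 by omega)
        unfold posT at hposle hm2
        omega
    omega

end WordLemmas


/-! ## The constructed candidate -/

/-- zero-valley set of the constructed word -/
def ZT (M N : ℕ) (T : Finset ℕ) : Finset (Fin (2*(M+N))) :=
  univ.filter (fun i => ∃ c ∈ T, posT N T c + 1 = i.1)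

/-- decorated-fall set -/
def FD (M N : ℕ) (T D : Finset ℕ) : Finset (Fin (2*(M+N))) :=
  univ.filter (fun i => ∃ c ∈ D, posT N T c = i.1)

section CandLemmas

variable {M N : ℕ} {T : Finset ℕ}
  (hT : T ⊆ range (M+N-1)) (hTc : T.card = M) (hN : 1 ≤ N)

include hT hTc hN

lemma posT_succ_of_mem {c : ℕ} (hc : c ∈ T) : posT N T (c+1) = posT N T c + 2 := by
  unfold posT
  rw [gg_succ_of_mem hc]
  omega

lemma posT_succ_of_not_mem {c : ℕ} (hc : c ∉ T) : posT N T (c+1) = posT N T c + 1 := by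
  unfold posT
  rw [gg_succ_of_not_mem hc]
  omega

lemma mem_T_lt {c : ℕ} (hc : c ∈ T) : c < M+N-1 := Finset.mem_range.1 (hT hc)

lemma wd_posT_succ_true {c : ℕ} (hc : c ∈ T) {i : Fin (2*(M+N))}
    (hi : i.1 = posT N T c + 1) : wd M N T i = true := by
  rw [wd_true_iff]
  rintro ⟨c', hc', hpc'⟩
  have hclt : c < M+N-1 := mem_T_lt hT hTc hN hc
  rcases lt_trichotomy c' (c+1) with h | h | h
  · have : posT N T c' ≤ posT N T c := by
      rcases eq_or_lt_of_le (show c' ≤ c by omega) with h' | h'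
      · rw [h']
      · exact le_of_lt (posT_strictMono N T h')
    omega
  · rw [h, posT_succ_of_mem hT hTc hN hc] at hpc'
    omega
  · have h2 : posT N T (c+1) ≤ posT N T c' := by
      rcases eq_or_lt_of_le (show c+1 ≤ c' by omega) with h' | h'
      · rw [h']
      · exact le_of_lt (posT_strictMono N T h')
    rw [posT_succ_of_mem hT hTc hN hc] at h2
    omega

lemma ZT_card : (ZT M N T).card = M := by
  have h : T.card = (ZT M N T).card := by
    apply Finset.card_bij (fun c hc => (⟨posT N T c + 1, by
        have := mem_T_lt hT hTc hN hc
        have := posT_lt hT hTc (show c+1 < M+N by omega)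
        rw [posT_succ_of_mem hT hTc hN hc] at this
        omega⟩ : Fin (2*(M+N))))
    · intro c hc
      unfold ZT
      rw [Finset.mem_filter]
      exact ⟨Finset.mem_univ _, c, hc, rfl⟩
    · intro c1 h1 c2 h2 heq
      have := congrArg Fin.val heq
      simp only at this
      exact (posT_strictMono N T).injective (by omega)
    · intro i hi
      unfold ZT at hi
      rw [Finset.mem_filter] at hi
      obtain ⟨c, hc, hpc⟩ := hi.2
      exact ⟨c, hc, Fin.ext hpc⟩
  rw [← h, hTc]

lemma ZT_valley : ∀ i ∈ ZT M N T, IsValleyS (wd M N T) i := by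
  intro i hi
  unfold ZT at hi
  rw [Finset.mem_filter] at hi
  obtain ⟨c, hc, hpc⟩ := hi.2
  constructor
  · exact wd_posT_succ_true hT hTc hN hc hpc.symm
  · exact ⟨⟨posT N T c, posT_lt hT hTc (show c < M+N by have := mem_T_lt hT hTc hN hc; omega)⟩,
      hpc.symm, wd_pos_false hT hTc hN (show c < M+N by have := mem_T_lt hT hTc hN hc; omega)⟩

variable {D : Finset ℕ} (hD : D ⊆ range (M+N)) (hDT : Disjoint T D)

include hD

lemma FD_card (hDc : D.card = B) : (FD M N T D).card = B := by
  rw [← hDc]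
  symm
  apply Finset.card_bij (fun c hc => (⟨posT N T c,
      posT_lt hT hTc (Finset.mem_range.1 (hD hc))⟩ : Fin (2*(M+N))))
  · intro c hc
    unfold FD
    rw [Finset.mem_filter]
    exact ⟨Finset.mem_univ _, c, hc, rfl⟩
  · intro c1 h1 c2 h2 heq
    have := congrArg Fin.val heq
    simp only at this
    exact (posT_strictMono N T).injective this
  · intro i hi
    unfold FD at hi
    rw [Finset.mem_filter] at hi
    obtain ⟨c, hc, hpc⟩ := hi.2
    exact ⟨c, hc, Fin.ext hpc⟩

include hDT

lemma FD_fall : ∀ i ∈ FD M N T D, IsFallX (wd M N T) i := by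
  intro i hi
  unfold FD at hi
  rw [Finset.mem_filter] at hi
  obtain ⟨c, hc, hpc⟩ := hi.2
  have hcS : c < M+N := Finset.mem_range.1 (hD hc)
  have hcT : c ∉ T := Finset.disjoint_right.1 hDT hc
  constructor
  · rw [wd_false_iff]
    exact ⟨c, hcS, hpc⟩
  · by_cases hc1 : c + 1 < M+N
    · right
      refine ⟨⟨posT N T c + 1, by rw [← posT_succ_of_not_mem hT hTc hN hcT]; exact posT_lt hT hTc hc1⟩,
        by simp only []; omega, ?_⟩
      rw [wd_false_iff]
      exact ⟨c+1, hc1, by simp only []; rw [posT_succ_of_not_mem hT hTc hN hcT]⟩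
    · left
      have hceq : c = M+N-1 := by omega
      have := posT_last hT hTc
      rw [hceq] at hpc
      omega

end CandLemmas


section Cand2
variable {M N : ℕ} {T : Finset ℕ}
  (hT : T ⊆ range (M+N-1)) (hTc : T.card = M) (hN : 1 ≤ N)

include hT hTc hN

lemma posT_zero : posT N T 0 = N := by
  unfold posT gg
  simp

lemma wd_at_N {i : Fin (2*(M+N))} (hi : i.1 = N) : wd M N T i = false := by
  rw [wd_false_iff]
  exact ⟨0, by omega, by rw [posT_zero hT hTc hN]; omega⟩

lemma cand_IsDDb {D : Finset ℕ} {B : ℕ} (hD : D ⊆ range (M+N)) (hDT : Disjoint T D)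
    (hDc : D.card = B) :
    IsDDb M N N B 0 ((wd M N T), (ZT M N T), (∅ : Finset (Fin (2*(M+N)))), FD M N T D) := by
  refine ⟨dyck_wd hT hTc hN, ZT_valley hT hTc hN, ZT_card hT hTc hN, ?_, ?_, ?_, ?_,
    FD_fall hT hTc hN hD hDT, FD_card hT hTc hN hD hDc, ?_, ?_⟩
  · intro i hi; exact absurd hi (Finset.notMem_empty i)
  · exact Finset.card_empty
  · exact Finset.disjoint_empty_left _
  · intro i hi; exact absurd hi (Finset.notMem_empty i)
  · intro i hi; exact wd_true_of_lt hT hTc hN hi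
  · intro i hi; exact wd_at_N hT hTc hN hi

lemma area_wd {D : Finset ℕ} (hD : D ⊆ range (M+N)) (hDT : Disjoint T D) :
    areaDDb ((wd M N T), (ZT M N T), (∅ : Finset (Fin (2*(M+N)))), FD M N T D)
      = ∑ c ∈ range (M+N) \ D, (N - 1 - pB T c) := by
  unfold areaDDb
  symm
  apply Finset.sum_bij (fun c hc => (⟨posT N T c,
    posT_lt hT hTc (Finset.mem_range.1 (Finset.mem_sdiff.1 hc).1)⟩ : Fin (2*(M+N))))
  · intro c hc
    rw [Finset.mem_sdiff, Finset.mem_range] at hc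
    rw [Finset.mem_filter]
    refine ⟨Finset.mem_univ _, wd_pos_false hT hTc hN hc.1, ?_⟩
    intro hmem
    unfold FD at hmem
    rw [Finset.mem_filter] at hmem
    obtain ⟨c', hc', hpc'⟩ := hmem.2
    simp only at hpc'
    have : c' = c := (posT_strictMono N T).injective hpc'
    exact hc.2 (this ▸ hc')
  · intro c1 h1 c2 h2 heq
    have := congrArg Fin.val heq
    simp only at this
    exact (posT_strictMono N T).injective this
  · intro i hi
    rw [Finset.mem_filter] at hi
    obtain ⟨c, hcS, hpc⟩ := (wd_false_iff M N T i).1 hi.2.1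
    refine ⟨c, Finset.mem_sdiff.2 ⟨Finset.mem_range.2 hcS, ?_⟩, Fin.ext hpc⟩
    intro hcD
    apply hi.2.2
    unfold FD
    rw [Finset.mem_filter]
    exact ⟨Finset.mem_univ _, c, hcD, hpc⟩
  · intro c hc
    rw [Finset.mem_sdiff, Finset.mem_range] at hc
    simp only
    rw [nBef_wd_pos hT hTc hN hc.1, eBef_wd_pos hT hTc hN hc.1]
    have h1 := gg_add_pB T c
    have h2 := pB_le_N hT hTc (show c ≤ M+N-1 by omega)
    omega

lemma colY_wd_zero : colY (wd M N T) 0 = N := by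
  unfold colY
  have heq : (univ.filter fun i : Fin (2*(M+N)) => wd M N T i = true ∧ eBef (wd M N T) i.1 ≤ 0)
      = univ.filter (fun i : Fin (2*(M+N)) => i.1 < N) := by
    ext i
    simp only [Finset.mem_filter, Finset.mem_univ, true_and]
    constructor
    · rintro ⟨h1, h2⟩
      rw [eBef_wd hT hTc hN, Nat.le_zero, Finset.card_eq_zero] at h2
      have h0 : ¬ (posT N T 0 < i.1) := by
        intro hcon
        have : (0:ℕ) ∈ (range (M+N)).filter fun c => posT N T c < i.1 :=
          Finset.mem_filter.2 ⟨Finset.mem_range.2 (by omega), hcon⟩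
        rw [h2] at this
        exact Finset.notMem_empty _ this
      rw [posT_zero hT hTc hN] at h0
      have hiN : i.1 ≤ N := by omega
      rcases eq_or_lt_of_le hiN with h | h
      · rw [wd_at_N hT hTc hN h] at h1; exact absurd h1 (by simp)
      · exact h
    · intro h
      refine ⟨wd_true_of_lt hT hTc hN h, ?_⟩
      rw [eBef_wd hT hTc hN]
      have : (range (M+N)).filter (fun c => posT N T c < i.1) = ∅ := by
        ext c
        simp only [Finset.mem_filter, Finset.mem_range, Finset.notMem_empty, iff_false,
          not_and]
        intro hc
        unfold posT
        omega
      rw [this]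
      simp
  rw [heq, card_filter_val_lt (by omega)]

lemma diag_col_iff (c : ℕ) : IsDiagCol (wd M N T) (ZT M N T) c ↔ c ∈ T := by
  constructor
  · rintro ⟨i, j, hif, hie, hji, hjZ⟩
    obtain ⟨c₀, hc₀, hpc₀⟩ := (wd_false_iff M N T i).1 hif
    have he : c₀ = c := by rw [← hie, ← hpc₀, eBef_wd_pos hT hTc hN hc₀]
    rw [he] at hpc₀
    unfold ZT at hjZ
    rw [Finset.mem_filter] at hjZ
    obtain ⟨c', hc', hpc'⟩ := hjZ.2
    have : posT N T c' = posT N T c := by omega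
    have : c' = c := (posT_strictMono N T).injective this
    exact this ▸ hc'
  · intro hc
    have hclt : c < M+N-1 := mem_T_lt hT hTc hN hc
    have hj : posT N T c + 1 < 2*(M+N) := by
      have := posT_lt hT hTc (show c+1 < M+N by omega)
      rw [posT_succ_of_mem hT hTc hN hc] at this
      omega
    refine ⟨⟨posT N T c, by omega⟩, ⟨posT N T c + 1, hj⟩,
      wd_pos_false hT hTc hN (by omega), eBef_wd_pos hT hTc hN (by omega), rfl, ?_⟩
    unfold ZT
    rw [Finset.mem_filter]
    exact ⟨Finset.mem_univ _, c, hc, rfl⟩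

lemma bH_wd (c : ℕ) : bH (wd M N T) (ZT M N T) 0 c = N + gg T c := by
  unfold bH
  rw [colY_wd_zero hT hTc hN]
  congr 1
  have h1 : ∀ x, diagStep (wd M N T) (ZT M N T) x = if x ∈ T then 1 else 0 := by
    intro x
    unfold diagStep
    by_cases hx : x ∈ T
    · rw [if_pos hx, if_pos ((diag_col_iff hT hTc hN x).2 hx)]
    · rw [if_neg hx, if_neg (fun hcon => hx ((diag_col_iff hT hTc hN x).1 hcon))]
  calc ∑ x ∈ Finset.Ico 0 c, diagStep (wd M N T) (ZT M N T) x
      = ∑ x ∈ range c, (if x ∈ T then 1 else 0) := by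
        rw [show Finset.Ico 0 c = range c from by rw [Finset.range_eq_Ico]]
        exact Finset.sum_congr rfl (fun x _ => h1 x)
    _ = gg T c := by
        rw [Finset.sum_ite_mem]
        unfold gg
        rw [Finset.sum_const, smul_eq_mul, mul_one]

lemma nextTouch_zero : nextTouch (M+N) (wd M N T) (ZT M N T) 0 = M+N := by
  unfold nextTouch
  apply le_antisymm
  · exact Nat.sInf_le (Or.inr rfl)
  · apply le_csInf ⟨M+N, Or.inr rfl⟩
    rintro b (⟨hb1, hb2⟩ | rfl)
    · by_contra hcon
      rw [bH_wd hT hTc hN] at hb2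
      have h1 := gg_add_pB T b
      have h2 := pB_le_N hT hTc (show b ≤ M+N-1 by omega)
      omega
    · exact le_refl _

end Cand2

lemma nextTouch_fix {L S : ℕ} (w : Fin L → Bool) (Z : Finset (Fin L)) :
    nextTouch S w Z S = S := by
  unfold nextTouch
  apply le_antisymm
  · exact Nat.sInf_le (Or.inr rfl)
  · apply le_csInf ⟨S, Or.inr rfl⟩
    rintro b (⟨hb1, _⟩ | rfl)
    · omega
    · exact le_refl _

section Cand3
variable {M N : ℕ} {T : Finset ℕ}
  (hT : T ⊆ range (M+N-1)) (hTc : T.card = M) (hN : 1 ≤ N)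
include hT hTc hN

lemma touchPt_wd {k : ℕ} (hk : 1 ≤ k) : touchPt (M+N) (wd M N T) (ZT M N T) k = M+N := by
  induction k with
  | zero => omega
  | succ k ih =>
    show nextTouch (M+N) (wd M N T) (ZT M N T) (touchPt (M+N) (wd M N T) (ZT M N T) k) = M+N
    rcases Nat.eq_zero_or_pos k with h | h
    · rw [h]
      show nextTouch (M+N) (wd M N T) (ZT M N T) 0 = M+N
      exact nextTouch_zero hT hTc hN
    · rw [ih (by omega)]
      exact nextTouch_fix _ _

lemma bounce_wd (P : Finset (Fin (2*(M+N)))) :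
    bounceS (M+N) (wd M N T) (ZT M N T) P = 0 := by
  unfold bounceS
  apply Finset.sum_eq_zero
  intro h hh
  rw [Finset.mem_filter, Finset.mem_range] at hh
  unfold bLabel
  rw [Finset.card_eq_zero]
  ext k
  simp only [Finset.mem_filter, Finset.mem_Icc, Finset.notMem_empty, iff_false, not_and]
  rintro ⟨hk1, hk2⟩
  rw [touchPt_wd hT hTc hN hk1]
  omega

end Cand3


/-! ## Structure of an arbitrary element of the set -/

/-- the set of FT-columns of a word -/
def T0 {L : ℕ} (SS N : ℕ) (w : Fin L → Bool) : Finset ℕ :=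
  (range (SS-1)).filter (fun c => ∃ i j : Fin L,
    w i = false ∧ eBef w i.1 = c ∧ j.1 = i.1 + 1 ∧ w j = true)

section Struct

variable {M N : ℕ} {w : Fin (2*(M+N)) → Bool} {Z : Finset (Fin (2*(M+N)))}
  (hN : 1 ≤ N)
  (hDy : IsDyckStep (M+N) w)
  (hZv : ∀ i ∈ Z, IsValleyS w i) (hZc : Z.card = M)
  (hr1 : ∀ i : Fin (2*(M+N)), i.1 < N → w i = true)
  (hr2 : ∀ i : Fin (2*(M+N)), i.1 = N → w i = false)

include hN hDy

lemma stA : eBef w (2*(M+N)) = M+N := by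
  have h1 := nBef_add_eBef w (le_refl (2*(M+N)))
  have h2 := hDy.1
  omega

lemma stLpos : 0 < 2*(M+N) := by omega

lemma stB : ∀ (hL : 2*(M+N)-1 < 2*(M+N)), w ⟨2*(M+N)-1, hL⟩ = false := by
  intro hL
  by_contra hcon
  have hlast : w ⟨2*(M+N)-1, hL⟩ = true := by
    cases h : w ⟨2*(M+N)-1, hL⟩
    · exact absurd h hcon
    · rfl
  have h1 := eBef_succ w (2*(M+N)-1) hL
  rw [hlast] at h1
  simp only [if_neg (by simp : ¬ (true = false))] at h1
  have h2 : 2*(M+N)-1+1 = 2*(M+N) := by omega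
  rw [h2, stA hN hDy] at h1
  have h3 := hDy.2 (2*(M+N)-1) (by omega)
  have h4 := nBef_add_eBef w (show 2*(M+N)-1 ≤ 2*(M+N) by omega)
  omega

include hZv hZc hr1 hr2

lemma stZ : Z = univ.filter (fun i => w i = true ∧ N ≤ i.1) := by
  have hsub : Z ⊆ univ.filter (fun i => w i = true ∧ N ≤ i.1) := by
    intro z hz
    obtain ⟨ht, j, hzj, hjf⟩ := hZv z hz
    rw [Finset.mem_filter]
    refine ⟨Finset.mem_univ _, ht, ?_⟩
    by_contra hcon
    have : j.1 < N := by omega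
    rw [hr1 j this] at hjf
    exact absurd hjf (by simp)
  apply Finset.eq_of_subset_of_card_le hsub ?_
  rw [hZc]
  -- card of the filter is M
  have hsplit : (univ.filter (fun i : Fin (2*(M+N)) => w i = true))
      = (univ.filter (fun i : Fin (2*(M+N)) => i.1 < N)) ∪
        (univ.filter (fun i : Fin (2*(M+N)) => w i = true ∧ N ≤ i.1)) := by
    ext i
    simp only [Finset.mem_union, Finset.mem_filter, Finset.mem_univ, true_and]
    constructor
    · intro ht
      by_cases hiN : i.1 < N
      · exact Or.inl hiN
      · exact Or.inr ⟨ht, by omega⟩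
    · rintro (h | ⟨h, _⟩)
      · exact hr1 i h
      · exact h
  have htru : (univ.filter (fun i : Fin (2*(M+N)) => w i = true)).card = M+N := by
    have h0 := hDy.1
    unfold nBef at h0
    have hfe : (univ.filter (fun i : Fin (2*(M+N)) => w i = true))
        = (univ.filter (fun i : Fin (2*(M+N)) => i.1 < 2*(M+N) ∧ w i = true)) := by
      ext i
      simp only [Finset.mem_filter, Finset.mem_univ, true_and]
      exact ⟨fun h => ⟨i.isLt, h⟩, fun h => h.2⟩
    rw [hfe]
    exact h0
  have hdisj : Disjoint (univ.filter (fun i : Fin (2*(M+N)) => i.1 < N))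
      (univ.filter (fun i : Fin (2*(M+N)) => w i = true ∧ N ≤ i.1)) := by
    rw [Finset.disjoint_left]
    intro i h1 h2
    rw [Finset.mem_filter] at h1 h2
    omega
  have hcard := Finset.card_union_of_disjoint hdisj
  rw [← hsplit] at hcard
  rw [card_filter_val_lt (show N ≤ 2*(M+N) by omega)] at hcard
  omega

lemma stF {i : Fin (2*(M+N))} (hi : w i = false) : N ≤ i.1 := by
  by_contra hcon
  rw [hr1 i (by omega)] at hi
  exact absurd hi (by simp)

/-- the key counting bijection, version with cutoff at a false position -/
lemma stV1 {i : Fin (2*(M+N))} (hi : w i = false) :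
    gg (T0 (M+N) N w) (eBef w i.1) = (Z.filter (fun z => z.1 < i.1)).card := by
  have key : (Z.filter (fun z => z.1 < i.1)).card
      = (range (eBef w i.1) ∩ T0 (M+N) N w).card := by
    apply Finset.card_bij (fun z _ => eBef w (z.1 - 1))
    · intro z hz
      rw [Finset.mem_filter] at hz
      obtain ⟨hzZ, hzi⟩ := hz
      obtain ⟨ht, j, hzj, hjf⟩ := hZv z hzZ
      rw [show z.1 - 1 = j.1 by omega]
      rw [Finset.mem_inter, Finset.mem_range]
      constructor
      · exact eBef_lt_of_false w hjf (by omega)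
      · unfold T0
        rw [Finset.mem_filter, Finset.mem_range]
        constructor
        · have h1 : eBef w j.1 < eBef w (2*(M+N)-1) :=
            eBef_lt_of_false w hjf (by omega)
          have h2 : eBef w (2*(M+N)-1) < eBef w (2*(M+N)) :=
            eBef_lt_of_false w (stB hN hDy (by omega)) (by omega)
          rw [stA hN hDy] at h2
          omega
        · exact ⟨j, z, hjf, rfl, by omega, ht⟩
    · intro z1 hz1 z2 hz2 heq
      rw [Finset.mem_filter] at hz1 hz2
      obtain ⟨ht1, j1, hzj1, hjf1⟩ := hZv z1 hz1.1
      obtain ⟨ht2, j2, hzj2, hjf2⟩ := hZv z2 hz2.1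
      rw [show z1.1 - 1 = j1.1 by omega, show z2.1 - 1 = j2.1 by omega] at heq
      have : j1 = j2 := eBef_injOn_false w hjf1 hjf2 heq
      apply Fin.ext
      have := congrArg Fin.val this
      omega
    · intro c hc
      rw [Finset.mem_inter, Finset.mem_range] at hc
      obtain ⟨hclt, hcT⟩ := hc
      unfold T0 at hcT
      rw [Finset.mem_filter] at hcT
      obtain ⟨_, i', j', hif, hie, hji, hjt⟩ := hcT
      have hjZ : j' ∈ Z := by
        rw [stZ hN hDy hZv hZc hr1 hr2, Finset.mem_filter]
        have := stF hN hDy hZv hZc hr1 hr2 hif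
        exact ⟨Finset.mem_univ _, hjt, by omega⟩
      have hii : i'.1 < i.1 := lt_of_eBef_lt w (by omega)
      have hjne : j'.1 ≠ i.1 := by
        intro hcon
        have : j' = i := Fin.ext hcon
        rw [this, hi] at hjt
        exact absurd hjt (by simp)
      refine ⟨j', Finset.mem_filter.2 ⟨hjZ, by omega⟩, ?_⟩
      rw [show j'.1 - 1 = i'.1 by omega, hie]
  unfold gg
  rw [key]

/-- total version of the counting bijection -/
lemma stV2 : (T0 (M+N) N w).card = M := by
  have h : Z.card = (T0 (M+N) N w).card := by
    apply Finset.card_bij (fun z (_ : z ∈ Z) => eBef w (z.1 - 1))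
    · intro z hzZ
      obtain ⟨ht, j, hzj, hjf⟩ := hZv z hzZ
      rw [show z.1 - 1 = j.1 by omega]
      unfold T0
      rw [Finset.mem_filter, Finset.mem_range]
      constructor
      · have h1 : eBef w j.1 < eBef w (2*(M+N)-1) :=
          eBef_lt_of_false w hjf (by omega)
        have h2 : eBef w (2*(M+N)-1) < eBef w (2*(M+N)) :=
          eBef_lt_of_false w (stB hN hDy (by omega)) (by omega)
        rw [stA hN hDy] at h2
        omega
      · exact ⟨j, z, hjf, rfl, by omega, ht⟩
    · intro z1 hz1 z2 hz2 heq
      obtain ⟨ht1, j1, hzj1, hjf1⟩ := hZv z1 hz1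
      obtain ⟨ht2, j2, hzj2, hjf2⟩ := hZv z2 hz2
      rw [show z1.1 - 1 = j1.1 by omega, show z2.1 - 1 = j2.1 by omega] at heq
      have : j1 = j2 := eBef_injOn_false w hjf1 hjf2 heq
      apply Fin.ext
      have := congrArg Fin.val this
      omega
    · intro c hcT
      unfold T0 at hcT
      rw [Finset.mem_filter] at hcT
      obtain ⟨_, i', j', hif, hie, hji, hjt⟩ := hcT
      have hjZ : j' ∈ Z := by
        rw [stZ hN hDy hZv hZc hr1 hr2, Finset.mem_filter]
        have := stF hN hDy hZv hZc hr1 hr2 hif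
        exact ⟨Finset.mem_univ _, hjt, by omega⟩
      refine ⟨j', hjZ, ?_⟩
      rw [show j'.1 - 1 = i'.1 by omega, hie]
  rw [← h]
  exact hZc

lemma stNBef {i : Fin (2*(M+N))} (hi : w i = false) :
    nBef w i.1 = N + (Z.filter (fun z => z.1 < i.1)).card := by
  have hiN : N ≤ i.1 := stF hN hDy hZv hZc hr1 hr2 hi
  unfold nBef
  have hsplit : (univ.filter (fun j : Fin (2*(M+N)) => j.1 < i.1 ∧ w j = true))
      = (univ.filter (fun j : Fin (2*(M+N)) => j.1 < N)) ∪
        (Z.filter (fun z => z.1 < i.1)) := by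
    ext j
    simp only [Finset.mem_union, Finset.mem_filter, Finset.mem_univ, true_and]
    constructor
    · rintro ⟨h1, h2⟩
      by_cases hjN : j.1 < N
      · exact Or.inl hjN
      · refine Or.inr ⟨?_, h1⟩
        rw [stZ hN hDy hZv hZc hr1 hr2, Finset.mem_filter]
        exact ⟨Finset.mem_univ _, h2, by omega⟩
    · rintro (h | ⟨h1, h2⟩)
      · exact ⟨by omega, hr1 j h⟩
      · rw [stZ hN hDy hZv hZc hr1 hr2, Finset.mem_filter] at h1
        exact ⟨h2, h1.2.1⟩
  have hdisj : Disjoint (univ.filter (fun j : Fin (2*(M+N)) => j.1 < N))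
      (Z.filter (fun z => z.1 < i.1)) := by
    rw [Finset.disjoint_left]
    intro j h1 h2
    rw [Finset.mem_filter] at h1 h2
    have := hZv j h2.1
    obtain ⟨_, j', hjj', hjf'⟩ := this
    have : N ≤ j'.1 := stF hN hDy hZv hZc hr1 hr2 hjf'
    omega
  rw [hsplit, Finset.card_union_of_disjoint hdisj,
    card_filter_val_lt (show N ≤ 2*(M+N) by omega)]

lemma stPos {i : Fin (2*(M+N))} (hi : w i = false) :
    posT N (T0 (M+N) N w) (eBef w i.1) = i.1 := by
  unfold posT
  rw [stV1 hN hDy hZv hZc hr1 hr2 hi]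
  have h1 := stNBef hN hDy hZv hZc hr1 hr2 hi
  have h2 := nBef_add_eBef w (le_of_lt i.isLt)
  omega

lemma stEBefLt {i : Fin (2*(M+N))} (hi : w i = false) : eBef w i.1 < M+N := by
  have := eBef_lt_of_false w hi i.isLt
  rw [stA hN hDy] at this
  exact this

lemma stSurj {c : ℕ} (hc : c < M+N) :
    ∃ i : Fin (2*(M+N)), w i = false ∧ eBef w i.1 = c := by
  have hBFcard : (univ.filter (fun i : Fin (2*(M+N)) => w i = false)).card = M+N := by
    have h0 := stA hN hDy
    unfold eBef at h0
    have hfe : (univ.filter (fun i : Fin (2*(M+N)) => w i = false))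
        = (univ.filter (fun i : Fin (2*(M+N)) => i.1 < 2*(M+N) ∧ w i = false)) := by
      ext i
      simp only [Finset.mem_filter, Finset.mem_univ, true_and]
      exact ⟨fun h => ⟨i.isLt, h⟩, fun h => h.2⟩
    rw [hfe]
    exact h0
  have hinj : Set.InjOn (fun i : Fin (2*(M+N)) => eBef w i.1)
      (univ.filter (fun i : Fin (2*(M+N)) => w i = false)) := by
    intro i hi j hj heq
    rw [Finset.mem_coe, Finset.mem_filter] at hi hj
    exact eBef_injOn_false w hi.2 hj.2 heq
  have himg : (univ.filter (fun i : Fin (2*(M+N)) => w i = false)).image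
      (fun i => eBef w i.1) = range (M+N) := by
    apply Finset.eq_of_subset_of_card_le
    · intro c' hc'
      rw [Finset.mem_image] at hc'
      obtain ⟨i, hi, rfl⟩ := hc'
      rw [Finset.mem_filter] at hi
      exact Finset.mem_range.2 (stEBefLt hN hDy hZv hZc hr1 hr2 hi.2)
    · rw [Finset.card_range, Finset.card_image_of_injOn hinj, hBFcard]
  have hmem : c ∈ (univ.filter (fun i : Fin (2*(M+N)) => w i = false)).image
      (fun i => eBef w i.1) := by
    rw [himg]
    exact Finset.mem_range.2 hc
  rw [Finset.mem_image] at hmem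
  obtain ⟨i, hi, hei⟩ := hmem
  rw [Finset.mem_filter] at hi
  exact ⟨i, hi.2, hei⟩

lemma stW : w = wd M N (T0 (M+N) N w) := by
  funext i
  cases hwi : w i
  · symm
    rw [wd_false_iff]
    exact ⟨eBef w i.1, stEBefLt hN hDy hZv hZc hr1 hr2 hwi,
      stPos hN hDy hZv hZc hr1 hr2 hwi⟩
  · symm
    rw [wd_true_iff]
    rintro ⟨c, hc, hpc⟩
    obtain ⟨i₀, hi₀f, hi₀e⟩ := stSurj hN hDy hZv hZc hr1 hr2 hc
    have := stPos hN hDy hZv hZc hr1 hr2 hi₀f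
    rw [hi₀e] at this
    have : i₀ = i := Fin.ext (by omega)
    rw [this, hwi] at hi₀f
    exact absurd hi₀f (by simp)

lemma stT0sub : T0 (M+N) N w ⊆ range (M+N-1) := Finset.filter_subset _ _

lemma stZT : ZT M N (T0 (M+N) N w) = Z := by
  ext i
  unfold ZT
  rw [Finset.mem_filter]
  constructor
  · rintro ⟨_, c, hcT, hpc⟩
    have hcT' := hcT
    unfold T0 at hcT'
    rw [Finset.mem_filter] at hcT'
    obtain ⟨_, i', j', hif, hie, hji, hjt⟩ := hcT'
    have := stPos hN hDy hZv hZc hr1 hr2 hif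
    rw [hie] at this
    have hij : i.1 = j'.1 := by omega
    have : i = j' := Fin.ext hij
    rw [this]
    rw [stZ hN hDy hZv hZc hr1 hr2, Finset.mem_filter]
    have := stF hN hDy hZv hZc hr1 hr2 hif
    exact ⟨Finset.mem_univ _, hjt, by omega⟩
  · intro hz
    obtain ⟨ht, j, hzj, hjf⟩ := hZv i hz
    refine ⟨Finset.mem_univ _, eBef w j.1, ?_, ?_⟩
    · unfold T0
      rw [Finset.mem_filter, Finset.mem_range]
      constructor
      · have h1 : eBef w j.1 < eBef w (2*(M+N)-1) :=
          eBef_lt_of_false w hjf (by omega)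
        have h2 : eBef w (2*(M+N)-1) < eBef w (2*(M+N)) :=
          eBef_lt_of_false w (stB hN hDy (by omega)) (by omega)
        rw [stA hN hDy] at h2
        omega
      · exact ⟨j, i, hjf, rfl, by omega, ht⟩
    · rw [stPos hN hDy hZv hZc hr1 hr2 hjf]
      omega

variable {F : Finset (Fin (2*(M+N)))} (hFf : ∀ i ∈ F, IsFallX w i)

include hFf

lemma stD0card : (F.image (fun i => eBef w i.1)).card = F.card := by
  apply Finset.card_image_of_injOn
  intro i hi j hj heq
  exact eBef_injOn_false w (hFf i (Finset.mem_coe.1 hi)).1 (hFf j (Finset.mem_coe.1 hj)).1 heq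

lemma stD0sub : F.image (fun i => eBef w i.1) ⊆ range (M+N) := by
  intro c hc
  rw [Finset.mem_image] at hc
  obtain ⟨i, hi, rfl⟩ := hc
  exact Finset.mem_range.2 (stEBefLt hN hDy hZv hZc hr1 hr2 (hFf i hi).1)

lemma stD0disj : Disjoint (T0 (M+N) N w) (F.image (fun i => eBef w i.1)) := by
  rw [Finset.disjoint_right]
  intro c hcD hcT
  rw [Finset.mem_image] at hcD
  obtain ⟨i, hiF, hei⟩ := hcD
  unfold T0 at hcT
  rw [Finset.mem_filter] at hcT
  obtain ⟨_, i', j', hif, hie, hji, hjt⟩ := hcT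
  have heqi : i' = i := eBef_injOn_false w hif (hFf i hiF).1 (by omega)
  rw [heqi] at hji
  rcases (hFf i hiF).2 with h | ⟨j, hj1, hj2⟩
  · omega
  · have : j = j' := Fin.ext (by omega)
    rw [this, hjt] at hj2
    exact absurd hj2 (by simp)

lemma stFD : FD M N (T0 (M+N) N w) (F.image (fun i => eBef w i.1)) = F := by
  ext i
  unfold FD
  rw [Finset.mem_filter]
  constructor
  · rintro ⟨_, c, hcD, hpc⟩
    rw [Finset.mem_image] at hcD
    obtain ⟨i₀, hi₀F, hei₀⟩ := hcD
    have := stPos hN hDy hZv hZc hr1 hr2 (hFf i₀ hi₀F).1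
    rw [hei₀] at this
    have : i = i₀ := Fin.ext (by omega)
    rw [this]
    exact hi₀F
  · intro hiF
    refine ⟨Finset.mem_univ _, eBef w i.1, Finset.mem_image_of_mem _ hiF, ?_⟩
    exact stPos hN hDy hZv hZc hr1 hr2 (hFf i hiF).1

end Struct


/-! ## Inverse lemmas -/

section Inv
variable {M N : ℕ} {T : Finset ℕ}
  (hT : T ⊆ range (M+N-1)) (hTc : T.card = M) (hN : 1 ≤ N)
include hT hTc hN

lemma T0_wd : T0 (M+N) N (wd M N T) = T := by
  ext c
  unfold T0
  rw [Finset.mem_filter, Finset.mem_range]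
  constructor
  · rintro ⟨hcS, i, j, hif, hie, hji, hjt⟩
    obtain ⟨c₀, hc₀S, hpc₀⟩ := (wd_false_iff M N T i).1 hif
    have hc₀c : c₀ = c := by rw [← hie, ← hpc₀, eBef_wd_pos hT hTc hN hc₀S]
    rw [hc₀c] at hpc₀
    by_contra hcT
    have hps := posT_succ_of_not_mem hT hTc hN hcT
    have hj : wd M N T j = false := by
      rw [wd_false_iff]
      exact ⟨c+1, by omega, by omega⟩
    rw [hjt] at hj
    exact absurd hj (by simp)
  · intro hcT
    have hclt := mem_T_lt hT hTc hN hcT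
    have hb : posT N T c + 1 < 2*(M+N) := by
      have := posT_lt hT hTc (show c+1 < M+N by omega)
      rw [posT_succ_of_mem hT hTc hN hcT] at this
      omega
    exact ⟨by omega, ⟨posT N T c, by omega⟩, ⟨posT N T c + 1, hb⟩,
      wd_pos_false hT hTc hN (by omega), eBef_wd_pos hT hTc hN (by omega), rfl,
      wd_posT_succ_true hT hTc hN hcT rfl⟩

lemma FD_img {D : Finset ℕ} (hD : D ⊆ range (M+N)) :
    (FD M N T D).image (fun i => eBef (wd M N T) i.1) = D := by
  ext c
  rw [Finset.mem_image]
  constructor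
  · rintro ⟨i, hi, rfl⟩
    unfold FD at hi
    rw [Finset.mem_filter] at hi
    obtain ⟨_, c', hc', hpc'⟩ := hi
    rw [← hpc', eBef_wd_pos hT hTc hN (Finset.mem_range.1 (hD hc'))]
    exact hc'
  · intro hc
    have hcS : c < M+N := Finset.mem_range.1 (hD hc)
    refine ⟨⟨posT N T c, posT_lt hT hTc hcS⟩, ?_, ?_⟩
    · unfold FD
      rw [Finset.mem_filter]
      exact ⟨Finset.mem_univ _, c, hc, rfl⟩
    · exact eBef_wd_pos hT hTc hN hcS

end Inv

/-! ## The set is empty if there are decorated peaks -/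

lemma noPeak {M N B A : ℕ} (hN : 1 ≤ N) {x : DDbCand (M+N)}
    (hx : IsDDb M N N B A x) : x.2.2.1 = ∅ := by
  obtain ⟨hDy, hZv, hZc, hPp, hPc, hPd, hPe, hFf, hFc, hr1, hr2⟩ := hx
  rw [← Finset.not_nonempty_iff_eq_empty]
  rintro ⟨i, hi⟩
  have hpk := hPp i hi
  have hiZ : i ∉ x.2.1 := Finset.disjoint_left.1 hPd hi
  have hiN : i.1 < N := by
    by_contra hcon
    apply hiZ
    rw [stZ hN hDy hZv hZc hr1 hr2, Finset.mem_filter]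
    exact ⟨Finset.mem_univ _, hpk.1, by omega⟩
  obtain ⟨j, hjpk, hji⟩ := hPe i hi
  have hj1 : j.1 + 1 < 2*(M+N) := by omega
  have := hjpk.2 ⟨j.1+1, hj1⟩ rfl
  rw [hr1 ⟨j.1+1, hj1⟩ (by simp only []; omega)] at this
  exact absurd this (by simp)

/-! ## The main bijection -/

lemma main_bij (M N B : ℕ) (hN : 1 ≤ N) :
    ∑ x ∈ univ.filter (IsDDb M N N B 0), qv ^ areaDDb x * tv ^ bounceDDb x
      = ∑ p ∈ (((range (M+N-1)).powersetCard M) ×ˢ ((range (M+N)).powersetCard B)).filter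
          (fun p => Disjoint p.1 p.2),
          qv ^ (∑ c ∈ range (M+N) \ p.2, (N - 1 - pB p.1 c)) := by
  symm
  apply Finset.sum_nbij'
    (i := fun p => ((wd M N p.1), (ZT M N p.1), (∅ : Finset (Fin (2*(M+N)))), FD M N p.1 p.2))
    (j := fun x => (T0 (M+N) N x.1, x.2.2.2.image (fun i => eBef x.1 i.1)))
  · -- hi : maps into the filter
    intro p hp
    rw [Finset.mem_filter, Finset.mem_product, Finset.mem_powersetCard,
      Finset.mem_powersetCard] at hp
    obtain ⟨⟨⟨hT, hTc⟩, hD, hDc⟩, hdisj⟩ := hp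
    rw [Finset.mem_filter]
    exact ⟨Finset.mem_univ _, cand_IsDDb hT hTc hN hD hdisj hDc⟩
  · -- hj : maps into J
    intro x hx
    rw [Finset.mem_filter] at hx
    obtain ⟨hDy, hZv, hZc, hPp, hPc, hPd, hPe, hFf, hFc, hr1, hr2⟩ := hx.2
    rw [Finset.mem_filter, Finset.mem_product, Finset.mem_powersetCard,
      Finset.mem_powersetCard]
    refine ⟨⟨⟨stT0sub hN hDy hZv hZc hr1 hr2, stV2 hN hDy hZv hZc hr1 hr2⟩,
      stD0sub hN hDy hZv hZc hr1 hr2 hFf, ?_⟩, stD0disj hN hDy hZv hZc hr1 hr2 hFf⟩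
    · rw [stD0card hN hDy hZv hZc hr1 hr2 hFf, hFc]
  · -- left inverse : fwd (back p) = p
    intro p hp
    rw [Finset.mem_filter, Finset.mem_product, Finset.mem_powersetCard,
      Finset.mem_powersetCard] at hp
    obtain ⟨⟨⟨hT, hTc⟩, hD, hDc⟩, hdisj⟩ := hp
    have h1 := T0_wd hT hTc hN
    have h2 := FD_img hT hTc hN hD
    simp only [h1, h2]
  · -- right inverse : back (fwd x) = x
    intro x hx
    rw [Finset.mem_filter] at hx
    obtain ⟨hDy, hZv, hZc, hPp, hPc, hPd, hPe, hFf, hFc, hr1, hr2⟩ := hx.2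
    have hP : x.2.2.1 = ∅ := by
      rw [← Finset.card_eq_zero]
      exact hPc
    have hw := stW hN hDy hZv hZc hr1 hr2
    have hz := stZT hN hDy hZv hZc hr1 hr2
    have hf := stFD hN hDy hZv hZc hr1 hr2 hFf
    simp only
    rw [← hw, hz, hf, ← hP]
  · -- values agree
    intro p hp
    rw [Finset.mem_filter, Finset.mem_product, Finset.mem_powersetCard,
      Finset.mem_powersetCard] at hp
    obtain ⟨⟨⟨hT, hTc⟩, hD, hDc⟩, hdisj⟩ := hp
    have harea := area_wd hT hTc hN hD hdisj
    have hbounce : bounceDDb ((wd M N p.1), (ZT M N p.1),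
        (∅ : Finset (Fin (2*(M+N)))), FD M N p.1 p.2) = 0 := bounce_wd hT hTc hN _
    rw [harea, hbounce, pow_zero, mul_one]


/-! ## Factorization of the parameter sum -/

lemma plain_reindex {M N : ℕ} {T : Finset ℕ}
    (hT : T ⊆ range (M+N-1)) (hTc : T.card = M) (hN : 1 ≤ N) (B : ℕ) :
    ∑ D ∈ (range (M+N) \ T).powersetCard B,
        qv ^ (∑ c ∈ (range (M+N) \ T) \ D, (N - 1 - pB T c)) = Hsum N B := by
  set plain := range (M+N) \ T with hplain
  have hTS : T ⊆ range (M+N) := by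
    intro x hx
    have := hT hx
    rw [Finset.mem_range] at *
    omega
  have hplaincard : plain.card = N := by
    rw [hplain, Finset.card_sdiff_of_subset hTS, Finset.card_range, hTc]
    omega
  have hpb_lt : ∀ c ∈ plain, pB T c ≤ N - 1 := by
    intro c hc
    rw [hplain, Finset.mem_sdiff, Finset.mem_range] at hc
    have hsub : range c \ T ⊆ plain.erase c := by
      intro x hx
      rw [Finset.mem_sdiff, Finset.mem_range] at hx
      rw [Finset.mem_erase, hplain, Finset.mem_sdiff, Finset.mem_range]
      exact ⟨by omega, by omega, hx.2⟩
    have hle := Finset.card_le_card hsub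
    have hcm : c ∈ plain := by
      rw [hplain, Finset.mem_sdiff, Finset.mem_range]
      exact ⟨hc.1, hc.2⟩
    rw [Finset.card_erase_of_mem hcm, hplaincard] at hle
    unfold pB
    exact hle
  have hpb_mono : ∀ c ∈ plain, ∀ c' ∈ plain, c < c' → pB T c < pB T c' := by
    intro c hc c' hc' hlt
    rw [hplain, Finset.mem_sdiff, Finset.mem_range] at hc hc'
    apply Finset.card_lt_card
    rw [Finset.ssubset_iff_of_subset]
    · exact ⟨c, Finset.mem_sdiff.2 ⟨Finset.mem_range.2 hlt, hc.2⟩,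
        fun hcon => by rw [Finset.mem_sdiff, Finset.mem_range] at hcon; omega⟩
    · intro x hx
      rw [Finset.mem_sdiff, Finset.mem_range] at hx ⊢
      exact ⟨by omega, hx.2⟩
  have hψinj : ∀ c ∈ plain, ∀ c' ∈ plain, N - 1 - pB T c = N - 1 - pB T c' → c = c' := by
    intro c hc c' hc' heq
    rcases lt_trichotomy c c' with h | h | h
    · have := hpb_mono c hc c' hc' h
      have := hpb_lt c hc
      have := hpb_lt c' hc'
      omega
    · exact h
    · have := hpb_mono c' hc' c hc h
      have := hpb_lt c hc
      have := hpb_lt c' hc'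
      omega
  have hψimg : plain.image (fun c => N - 1 - pB T c) = range N := by
    apply Finset.eq_of_subset_of_card_le
    · intro y hy
      rw [Finset.mem_image] at hy
      obtain ⟨c, hc, rfl⟩ := hy
      rw [Finset.mem_range]
      have := hpb_lt c hc
      omega
    · rw [Finset.card_range, Finset.card_image_of_injOn, hplaincard]
      intro c hc c' hc' heq
      exact hψinj c (Finset.mem_coe.1 hc) c' (Finset.mem_coe.1 hc') heq
  unfold Hsum
  apply Finset.sum_bij (fun D _ => D.image (fun c => N - 1 - pB T c))
  · intro D hD
    rw [Finset.mem_powersetCard] at hD ⊢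
    constructor
    · rw [← hψimg]
      exact Finset.image_subset_image hD.1
    · rw [Finset.card_image_of_injOn, hD.2]
      intro c hc c' hc' heq
      exact hψinj c (hD.1 (Finset.mem_coe.1 hc)) c' (hD.1 (Finset.mem_coe.1 hc')) heq
  · intro D1 h1 D2 h2 heq
    rw [Finset.mem_powersetCard] at h1 h2
    ext c
    constructor
    · intro hc
      have : (N - 1 - pB T c) ∈ D2.image (fun c => N - 1 - pB T c) := by
        rw [← heq]
        exact Finset.mem_image_of_mem _ hc
      rw [Finset.mem_image] at this
      obtain ⟨c', hc', heq'⟩ := this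
      rw [hψinj c' (h2.1 hc') c (h1.1 hc) heq']  at hc'
      exact hc'
    · intro hc
      have : (N - 1 - pB T c) ∈ D1.image (fun c => N - 1 - pB T c) := by
        rw [heq]
        exact Finset.mem_image_of_mem _ hc
      rw [Finset.mem_image] at this
      obtain ⟨c', hc', heq'⟩ := this
      rw [hψinj c' (h1.1 hc') c (h2.1 hc) heq'] at hc'
      exact hc'
  · intro E hE
    rw [Finset.mem_powersetCard] at hE
    refine ⟨plain.filter (fun c => (N - 1 - pB T c) ∈ E), ?_, ?_⟩
    · rw [Finset.mem_powersetCard]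
      have himg : (plain.filter (fun c => (N - 1 - pB T c) ∈ E)).image
          (fun c => N - 1 - pB T c) = E := by
        apply Finset.Subset.antisymm
        · intro y hy
          rw [Finset.mem_image] at hy
          obtain ⟨c, hc, rfl⟩ := hy
          exact (Finset.mem_filter.1 hc).2
        · intro e he
          have : e ∈ plain.image (fun c => N - 1 - pB T c) := by
            rw [hψimg]
            exact hE.1 he
          rw [Finset.mem_image] at this
          obtain ⟨c, hc, rfl⟩ := this
          exact Finset.mem_image_of_mem _ (Finset.mem_filter.2 ⟨hc, he⟩)
      refine ⟨Finset.filter_subset _ _, ?_⟩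
      have hcardimg : ((plain.filter (fun c => (N - 1 - pB T c) ∈ E)).image
          (fun c => N - 1 - pB T c)).card
          = (plain.filter (fun c => (N - 1 - pB T c) ∈ E)).card := by
        apply Finset.card_image_of_injOn
        intro c hc c' hc' heq
        exact hψinj c (Finset.mem_of_mem_filter c (Finset.mem_coe.1 hc))
          c' (Finset.mem_of_mem_filter c' (Finset.mem_coe.1 hc')) heq
      rw [← hcardimg, himg, hE.2]
    · apply Finset.Subset.antisymm
      · intro y hy
        rw [Finset.mem_image] at hy
        obtain ⟨c, hc, rfl⟩ := hy
        exact (Finset.mem_filter.1 hc).2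
      · intro e he
        have : e ∈ plain.image (fun c => N - 1 - pB T c) := by
          rw [hψimg]
          exact hE.1 he
        rw [Finset.mem_image] at this
        obtain ⟨c, hc, rfl⟩ := this
        exact Finset.mem_image_of_mem _ (Finset.mem_filter.2 ⟨hc, he⟩)
  · intro D hD
    rw [Finset.mem_powersetCard] at hD
    congr 1
    have h1 : (plain \ D).image (fun c => N - 1 - pB T c)
        = range N \ D.image (fun c => N - 1 - pB T c) := by
      ext y
      rw [Finset.mem_sdiff, Finset.mem_image]
      constructor
      · rintro ⟨c, hc, rfl⟩
        rw [Finset.mem_sdiff] at hc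
        constructor
        · rw [← hψimg]
          exact Finset.mem_image_of_mem _ hc.1
        · intro hcon
          rw [Finset.mem_image] at hcon
          obtain ⟨c', hc', heq'⟩ := hcon
          rw [hψinj c' (hD.1 hc') c hc.1 heq'] at hc'
          exact hc.2 hc'
      · rintro ⟨hy1, hy2⟩
        have : y ∈ plain.image (fun c => N - 1 - pB T c) := by rw [hψimg]; exact hy1
        rw [Finset.mem_image] at this
        obtain ⟨c, hc, rfl⟩ := this
        refine ⟨c, Finset.mem_sdiff.2 ⟨hc, ?_⟩, rfl⟩
        intro hcon
        exact hy2 (Finset.mem_image_of_mem _ hcon)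
    rw [← h1, Finset.sum_image]
    intro c hc c' hc' heq
    rw [Finset.mem_coe, Finset.mem_sdiff] at hc hc'
    exact hψinj c hc.1 c' hc'.1 heq

lemma factor (M N B : ℕ) (hN : 1 ≤ N) :
    ∑ p ∈ (((range (M+N-1)).powersetCard M) ×ˢ ((range (M+N)).powersetCard B)).filter
          (fun p => Disjoint p.1 p.2),
          qv ^ (∑ c ∈ range (M+N) \ p.2, (N - 1 - pB p.1 c))
      = Gsum M N * Hsum N B := by
  rw [Finset.sum_filter, Finset.sum_product]
  unfold Gsum
  rw [Finset.sum_mul]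
  apply Finset.sum_congr rfl
  intro T hTmem
  rw [Finset.mem_powersetCard] at hTmem
  obtain ⟨hT, hTc⟩ := hTmem
  have hstep1 : ∑ D ∈ (range (M+N)).powersetCard B,
      (if Disjoint T D then qv ^ (∑ c ∈ range (M+N) \ D, (N - 1 - pB T c)) else 0)
      = ∑ D ∈ ((range (M+N)).powersetCard B).filter (fun D => Disjoint T D),
        qv ^ (∑ c ∈ range (M+N) \ D, (N - 1 - pB T c)) := by
    rw [Finset.sum_filter]
  have hTS : T ⊆ range (M+N) := by
    intro x hx
    have := hT hx
    rw [Finset.mem_range] at *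
    omega
  have hstep2 : ((range (M+N)).powersetCard B).filter (fun D => Disjoint T D)
      = (range (M+N) \ T).powersetCard B := by
    ext D
    rw [Finset.mem_filter, Finset.mem_powersetCard, Finset.mem_powersetCard]
    constructor
    · rintro ⟨⟨hD1, hD2⟩, hdis⟩
      refine ⟨?_, hD2⟩
      intro x hx
      rw [Finset.mem_sdiff]
      exact ⟨hD1 hx, Finset.disjoint_right.1 hdis hx⟩
    · rintro ⟨hD1, hD2⟩
      refine ⟨⟨fun x hx => (Finset.mem_sdiff.1 (hD1 hx)).1, hD2⟩, ?_⟩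
      rw [Finset.disjoint_right]
      intro x hx
      exact (Finset.mem_sdiff.1 (hD1 hx)).2
  rw [hstep1, hstep2]
  have hstep3 : ∀ D ∈ (range (M+N) \ T).powersetCard B,
      qv ^ (∑ c ∈ range (M+N) \ D, (N - 1 - pB T c))
      = qv ^ (∑ c ∈ T, (N - 1 - pB T c)) *
        qv ^ (∑ c ∈ (range (M+N) \ T) \ D, (N - 1 - pB T c)) := by
    intro D hD
    rw [Finset.mem_powersetCard] at hD
    rw [← pow_add]
    congr 1
    have hun : range (M+N) \ D = T ∪ ((range (M+N) \ T) \ D) := by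
      ext x
      rw [Finset.mem_sdiff, Finset.mem_union, Finset.mem_sdiff, Finset.mem_sdiff]
      constructor
      · rintro ⟨hx1, hx2⟩
        by_cases hxT : x ∈ T
        · exact Or.inl hxT
        · exact Or.inr ⟨⟨hx1, hxT⟩, hx2⟩
      · rintro (hxT | ⟨⟨hx1, _⟩, hx2⟩)
        · refine ⟨hTS hxT, ?_⟩
          intro hcon
          exact (Finset.mem_sdiff.1 (hD.1 hcon)).2 hxT
        · exact ⟨hx1, hx2⟩
    rw [hun, Finset.sum_union]
    rw [Finset.disjoint_left]
    intro x hx1 hx2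
    rw [Finset.mem_sdiff, Finset.mem_sdiff] at hx2
    exact hx2.1.2 hx1
  rw [Finset.sum_congr rfl hstep3, ← Finset.mul_sum]
  congr 1
  exact plain_reindex hT hTc hN B

/-- For `n ≥ 1` and `m, a, b ≥ 0`, the `(area, bounce)`
q,t-enumerator of decorated Dyck paths with decorated falls satisfies
`DDb_{q,t}(m, n∖n)^{∗b,∘a}
  = δ_{a,0} ⬝ q^(binom (n-b) 2) ⬝ [m+n-1 choose m]_q ⬝ [n choose b]_q`. -/
theorem DDb_fully_diagonal (m n a b : ℤ)
    (hn : 1 ≤ n) (hm : 0 ≤ m) (ha : 0 ≤ a) (hb : 0 ≤ b) :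
    DDbE m n n b a =
      (if a = 0 then 1 else 0) * qv ^ ((n - b) * (n - b - 1) / 2).toNat *
        qBinomZ (m + n - 1) m * qBinomZ n b := by
  unfold DDbE
  rw [if_pos ⟨hm, by omega, by omega, hb, ha⟩]
  set M := m.toNat with hM
  set N := n.toNat with hN'
  set B := b.toNat with hB
  set A := a.toNat with hA
  have hN1 : 1 ≤ N := by omega
  by_cases haz : a = 0
  · rw [if_pos haz]
    have hA0 : A = 0 := by omega
    rw [hA0]
    rw [main_bij M N B hN1, factor M N B hN1, Gsum_eq, Hsum_eq]
    have hq1 : qBinomZ (m + n - 1) m = qBinom (M+N-1) M := by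
      unfold qBinomZ
      rw [if_pos ⟨hm, by omega⟩]
      have h1 : (m+n-1).toNat = M+N-1 := by omega
      have h2 : m.toNat = M := by omega
      rw [h1, h2]
    rw [hq1]
    by_cases hbn : b ≤ n
    · have hq2 : qBinomZ n b = qBinom N B := by
        unfold qBinomZ
        rw [if_pos ⟨hb, hbn⟩]
      rw [hq2]
      have hexp : ((n - b) * (n - b - 1) / 2).toNat = (N - B).choose 2 := by
        have hDnb : n - b = ((N - B : ℕ) : ℤ) := by omega
        rcases Nat.eq_zero_or_pos (N - B) with h0 | hpos
        · rw [hDnb, h0]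
          simp
        · have h1 : ((N - B : ℕ) : ℤ) - 1 = ((N - B - 1 : ℕ) : ℤ) := by omega
          rw [hDnb, h1, ← Nat.cast_mul]
          rw [show (2 : ℤ) = ((2 : ℕ) : ℤ) from rfl, ← Int.natCast_div]
          rw [Int.toNat_natCast, Nat.choose_two_right]
      rw [hexp]
      ring
    · have hq2 : qBinomZ n b = 0 := by
        unfold qBinomZ
        rw [if_neg (by omega)]
      have hq3 : qBinom N B = 0 := qBinom_zero (by omega)
      rw [hq2, hq3]
      ring
  · rw [if_neg haz]
    have hA1 : 1 ≤ A := by omega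
    have hfe : univ.filter (IsDDb M N N B A) = (∅ : Finset (DDbCand (M+N))) := by
      rw [Finset.eq_empty_iff_forall_notMem]
      intro x hx
      rw [Finset.mem_filter] at hx
      have hP := noPeak hN1 hx.2
      obtain ⟨_, _, _, _, hPc, _⟩ := hx.2
      rw [hP, Finset.card_empty] at hPc
      omega
    rw [hfe, Finset.sum_empty]
    ring
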